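/- For all coprime integers p and q, the complexity satisfies |p,q| = |q,p|. -/
import Mathlib


/-- The complexity `|p,q|` of a coprime pair of integers, defined recursively by
`|±1,0| = |0,±1| = |1,1| = 0`, `|p,q| = 1 + |p,q-p|` if `q > p > 0`,
`|p,q| = 1 + |p-q,q|` if `p > q > 0`, `|p,q| = |p,-q| + 1` if `p > 0 > q`, and
`|p,q| = |-p,-q|` if `p < 0` and `q ≠ 0`. -/
def pqComplexity (p q : ℤ) : ℕ :=
  if h1 : p < 0 then
    if q = 0 then 0 else pqComplexity (-p) (-q)
  else if h2 : p = 0 then 0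
  else
    if h3 : q < 0 then pqComplexity p (-q) + 1
    else if h4 : q = 0 then 0
    else
      if h5 : p < q then 1 + pqComplexity p (q - p)
      else if h6 : q < p then 1 + pqComplexity (p - q) q
      else 0
termination_by 3 * (p.natAbs + q.natAbs) + (if p < 0 then 2 else if q < 0 then 1 else 0)
decreasing_by
  all_goals (split_ifs <;> omega)

lemma c_left_zero (q : ℤ) : pqComplexity 0 q = 0 := by
  rw [pqComplexity]; split_ifs <;> omega

lemma c_right_zero (p : ℤ) : pqComplexity p 0 = 0 := by
  rw [pqComplexity]; split_ifs <;> omega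

lemma c_neg {p q : ℤ} (hp : p < 0) (hq : q ≠ 0) :
    pqComplexity p q = pqComplexity (-p) (-q) := by
  rw [pqComplexity]; split_ifs <;> omega

lemma c_negq {p q : ℤ} (hp : 0 < p) (hq : q < 0) :
    pqComplexity p q = pqComplexity p (-q) + 1 := by
  rw [pqComplexity]; split_ifs <;> omega

lemma c_lt {p q : ℤ} (hp : 0 < p) (h : p < q) :
    pqComplexity p q = 1 + pqComplexity p (q - p) := by
  rw [pqComplexity]; split_ifs <;> omega

lemma c_gt {p q : ℤ} (hq : 0 < q) (h : q < p) :
    pqComplexity p q = 1 + pqComplexity (p - q) q := by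
  rw [pqComplexity]; split_ifs <;> omega

lemma c_diag {p q : ℤ} (hp : 0 < p) (hpq : p = q) : pqComplexity p q = 0 := by
  rw [pqComplexity]; split_ifs <;> omega

lemma gcd_sub_right {p q : ℤ} (h : Int.gcd p q = 1) : Int.gcd p (q - p) = 1 := by
  rw [Int.isCoprime_iff_gcd_eq_one.symm] at h ⊢
  have := h.add_mul_left_right (-1)
  simpa [mul_neg_one, ← sub_eq_add_neg] using this

lemma gcd_sub_left {p q : ℤ} (h : Int.gcd p q = 1) : Int.gcd (p - q) q = 1 := by
  rw [Int.isCoprime_iff_gcd_eq_one.symm] at h ⊢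
  have := h.add_mul_right_left (-1)
  simpa [mul_neg_one, ← sub_eq_add_neg] using this

lemma pos_comm : ∀ (n : ℕ) (p q : ℤ), 0 < p → 0 < q → p.natAbs + q.natAbs ≤ n →
    Int.gcd p q = 1 → pqComplexity p q = pqComplexity q p := by
  intro n
  induction n with
  | zero => intro p q hp hq hle hg; omega
  | succ n ih =>
    intro p q hp hq hle hg
    rcases lt_trichotomy p q with h5 | h5 | h5
    · rw [c_lt hp h5, c_gt hp h5]
      have h1 := ih p (q - p) hp (by omega) (by omega) (gcd_sub_right hg)
      omega
    · rw [c_diag hp h5, c_diag (h5 ▸ hp) h5.symm]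
    · rw [c_gt hq h5, c_lt hq h5]
      have h1 := ih (p - q) q (by omega) hq (by omega) (gcd_sub_left hg)
      omega

/-- For all coprime integers `p` and `q`, `|p,q| = |q,p|`. -/
theorem pqComplexity_comm (p q : ℤ) (h : Int.gcd p q = 1) :
    pqComplexity p q = pqComplexity q p := by
  rcases lt_trichotomy p 0 with hp | hp | hp
  · rcases lt_trichotomy q 0 with hq | hq | hq
    · rw [c_neg hp (by omega), c_neg hq (by omega)]
      exact pos_comm _ (-p) (-q) (by omega) (by omega) le_rfl
        (by simpa [Int.gcd] using h)
    · subst hq; rw [c_right_zero, c_left_zero]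
    · rw [c_neg hp (by omega), c_negq (by omega) (by omega), neg_neg,
        c_negq hq hp]
      have := pos_comm _ (-p) q (by omega) hq le_rfl (by simpa [Int.gcd] using h)
      omega
  · subst hp; rw [c_left_zero, c_right_zero]
  · rcases lt_trichotomy q 0 with hq | hq | hq
    · rw [c_negq hp hq, c_neg hq (by omega),
        c_negq (p := -q) (q := -p) (by omega) (by omega), neg_neg]
      have := pos_comm _ p (-q) hp (by omega) le_rfl (by simpa [Int.gcd] using h)
      omega
    · subst hq; rw [c_right_zero, c_left_zero]
    · exact pos_comm _ p q hp hq le_rfl h
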